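/- Let E be a real finite-dimensional normed vector space, let L ≥ 0, and let f : E → ℝ be differentiable and 0-approximable with parameter L, i.e. |f(y) − f(x) − ⟨f'(x), y − x⟩| ≤ L·‖y − x‖ for all x, y ∈ E. Then the gradient of f is bounded in oscillation by 2L, i.e. ‖f'(x) − f'(y)‖* ≤ 2L for all x, y ∈ E. -/

import Mathlib

/-- 0-approximability with parameter L implies the oscillation of the gradient is
bounded by 2L. -/
theorem zero_approximable_implies_bounded_gradient_oscillation
    {E : Type*} [NormedAddCommGroup E] [NormedSpace ℝ E] [FiniteDimensional ℝ E]
    (L : ℝ) (hL : 0 ≤ L)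
    (f : E → ℝ) (f' : E → (E →L[ℝ] ℝ))
    (hdiff : ∀ x, HasFDerivAt f (f' x) x)
    (happrox : ∀ x y : E, |f y - f x - f' x (y - x)| ≤ L * ‖y - x‖) :
    ∀ x y : E, ‖f' x - f' y‖ ≤ 2 * L := by
  intro x y
  refine ContinuousLinearMap.opNorm_le_bound _ (by linarith) ?_
  intro h
  have key : ∀ t : ℝ, 0 < t →
      |f' x h - f' y h| ≤ 2 * L * ‖h‖ + 2 * L * ‖y - x‖ / t := by
    intro t ht
    have A := happrox x (y + t • h)
    have B := happrox y (y + t • h)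
    have C := happrox x y
    have hz : y + t • h - x = (y - x) + t • h := by abel
    have hzy : y + t • h - y = t • h := by abel
    rw [hz] at A
    rw [hzy] at B
    have hmapA : (f' x) ((y - x) + t • h) = f' x (y - x) + t * f' x h := by
      rw [map_add, map_smul]; rfl
    have hmapB : (f' y) (t • h) = t * f' y h := by rw [map_smul]; rfl
    rw [hmapA] at A
    rw [hmapB] at B
    have hnorm : ‖(y - x) + t • h‖ ≤ ‖y - x‖ + t * ‖h‖ := by
      calc ‖(y - x) + t • h‖ ≤ ‖y - x‖ + ‖t • h‖ := norm_add_le _ _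
        _ = ‖y - x‖ + t * ‖h‖ := by rw [norm_smul, Real.norm_of_nonneg ht.le]
    have hnormB : ‖t • h‖ = t * ‖h‖ := by
      rw [norm_smul, Real.norm_of_nonneg ht.le]
    rw [hnormB] at B
    have hident : t * (f' x h - f' y h) =
        ((f' x (y - x) + t * f' x h) - (f (y + t • h) - f x))
        + ((f (y + t • h) - f y) - t * f' y h)
        + ((f y - f x) - f' x (y - x)) := by ring
    have habs : t * |f' x h - f' y h| ≤ 2 * L * (t * ‖h‖) + 2 * L * ‖y - x‖ := by
      have e1 : |((f' x (y - x) + t * f' x h) - (f (y + t • h) - f x))|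
          = |f (y + t • h) - f x - (f' x (y - x) + t * f' x h)| := abs_sub_comm _ _
      have h3 := abs_add_three
        ((f' x (y - x) + t * f' x h) - (f (y + t • h) - f x))
        ((f (y + t • h) - f y) - t * f' y h)
        ((f y - f x) - f' x (y - x))
      rw [← hident, e1, abs_mul, abs_of_nonneg ht.le] at h3
      have hA' : L * ‖(y - x) + t • h‖ ≤ L * (‖y - x‖ + t * ‖h‖) :=
        mul_le_mul_of_nonneg_left hnorm hL
      nlinarith [h3, A, B, C]
    calc |f' x h - f' y h| = t * |f' x h - f' y h| / t := by
          field_simp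
      _ ≤ (2 * L * (t * ‖h‖) + 2 * L * ‖y - x‖) / t :=
          by gcongr
      _ = 2 * L * ‖h‖ + 2 * L * ‖y - x‖ / t := by
          field_simp
  have main : |f' x h - f' y h| ≤ 2 * L * ‖h‖ := by
    refine le_of_forall_pos_le_add ?_
    intro ε hε
    have hden : (0:ℝ) < 2 * L * ‖y - x‖ + 1 := by positivity
    set t : ℝ := (2 * L * ‖y - x‖ + 1) / ε with ht
    have ht0 : 0 < t := div_pos hden hε
    have := key t ht0
    have hrem : 2 * L * ‖y - x‖ / t ≤ ε := by
      rw [ht, div_div_eq_mul_div, div_le_iff₀ hden]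
      have : 2 * L * ‖y - x‖ ≤ 2 * L * ‖y - x‖ + 1 := by linarith
      nlinarith [hε.le, mul_nonneg (mul_nonneg (by linarith : (0:ℝ) ≤ 2*L) (norm_nonneg (y-x))) hε.le]
    linarith
  simpa using main
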